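/- arXiv:1708.04635 — 2 statements merged into one kernel-verified Lean document; each statement's English description precedes it below -/
import Mathlib

section
/- Let R be a Noetherian commutative ring, N a finitely generated R-module, and T a Noetherian commutative ring that is a faithfully flat R-algebra. Then for any ideal I of R, the contraction to R of the integral closure of the extended ideal IT relative to N ⊗_R T equals the integral closure of I relative to N: (IT)^{(N ⊗_R T)}_a ∩ R = I^{(N)}_a. -/
open Pointwise

section Defs

variable {R : Type} [CommRing R]

/-- `x` is integrally dependent on the ideal `I` relative to the module `N`:
`x ^ n • N ⊆ ∑_{i=1}^n x^(n-i) • (I^i • N)` for some `n ≥ 1`. -/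
def Ideal.RelIntDep (I : Ideal R) (N : Type) [AddCommGroup N] [Module R N] (x : R) : Prop :=
  ∃ n : ℕ, 0 < n ∧ ∀ m : N, x ^ n • m ∈
    ⨆ i ∈ Finset.Icc 1 n, x ^ (n - i) • (I ^ i • (⊤ : Submodule R N))

/-- The integral closure `I^{(N)}_a` of `I` relative to `N`, as a subset of `R`. -/
def Ideal.relIntClosure (I : Ideal R) (N : Type) [AddCommGroup N] [Module R N] : Set R :=
  {x | I.RelIntDep N x}

/-- The classical integral closure `I_a` of an ideal, as a subset of `R`. -/
def Ideal.intClosure (I : Ideal R) : Set R :=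
  {x | ∃ n : ℕ, 0 < n ∧ ∃ r : ℕ → R, (∀ i ∈ Finset.Icc 1 n, r i ∈ I ^ i) ∧
    x ^ n + ∑ i ∈ Finset.Icc 1 n, r i * x ^ (n - i) = 0}

/-- `mAss_R N`: the set of minimal members of `Ass_R N`. -/
def mAss (R : Type) [CommRing R] (N : Type) [AddCommGroup N] [Module R N] : Set (Ideal R) :=
  {p | Minimal (· ∈ associatedPrimes R N) p}

/-- `Ass_R (R/J)` for a subset `J ⊆ R`: primes of the form `(J :_R x)`. -/
def assQuot (J : Set R) : Set (Ideal R) :=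
  {p | p.IsPrime ∧ ∃ x : R, (p : Set R) = {r : R | r * x ∈ J}}

/-- `Ass_R (J/K)` for subsets `K ⊆ J` of `R`: primes of the form `(K :_R x)` with `x ∈ J`. -/
def assQuot₂ (J K : Set R) : Set (Ideal R) :=
  {p | p.IsPrime ∧ ∃ x ∈ J, (p : Set R) = {r : R | r * x ∈ K}}

/-- `S(J) = ∪_{s ∈ S} (J :_R s)`. -/
def sat (S : Set R) (J : Set R) : Set R := {x | ∃ s ∈ S, s * x ∈ J}

/-- `(J :_R K)` for subsets of `R`. -/
def setColon (J K : Set R) : Set R := {x | ∀ y ∈ K, x * y ∈ J}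

/-- `(J :_R ⟨K⟩) = ∪_{n ≥ 1} (J :_R K^n)`. -/
def colonPow (J : Set R) (K : Ideal R) : Set R :=
  {x | ∃ n : ℕ, 0 < n ∧ ∀ y ∈ K ^ n, x * y ∈ J}

end Defs

section Aux

open TensorProduct

variable {R : Type} [CommRing R] {T : Type} [CommRing T] [Algebra R T]
  {N : Type} [AddCommGroup N] [Module R N]

lemma aux_baseChange_mono {p q : Submodule R N} (h : p ≤ q) :
    p.baseChange T ≤ q.baseChange T :=
  by rw [Submodule.baseChange_eq_span, Submodule.baseChange_eq_span]; exact Submodule.span_mono (Set.image_mono h)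

lemma aux_baseChange_iSup {ι : Sort*} (p : ι → Submodule R N) :
    (⨆ i, p i).baseChange T = ⨆ i, (p i).baseChange T := by
  refine le_antisymm ?_ (iSup_le fun i => aux_baseChange_mono (le_iSup p i))
  rw [Submodule.baseChange_eq_span, Submodule.span_le]
  rintro - ⟨y, hy, rfl⟩
  show (1:T) ⊗ₜ[R] y ∈ ⨆ i, (p i).baseChange T
  refine Submodule.iSup_induction (motive := fun z => (1:T) ⊗ₜ[R] z ∈ ⨆ i, (p i).baseChange T)
    p hy (fun i z hz => ?_) (by simp) (fun z w hz hw => ?_)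
  · exact Submodule.mem_iSup_of_mem i (Submodule.tmul_mem_baseChange_of_mem 1 hz)
  · simpa [TensorProduct.tmul_add] using Submodule.add_mem _ hz hw

lemma aux_baseChange_ideal_smul (J : Ideal R) (p : Submodule R N) :
    (J • p).baseChange T = J.map (algebraMap R T) • p.baseChange T := by
  refine le_antisymm ?_ ?_
  · rw [Submodule.baseChange_eq_span, Submodule.span_le]
    rintro - ⟨y, hy, rfl⟩
    refine Submodule.smul_induction_on hy (fun a ha z hz => ?_) (fun z w hz hw => ?_)
    · have : (TensorProduct.mk R T N 1) (a • z) = algebraMap R T a • ((1:T) ⊗ₜ[R] z) := by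
        simp [TensorProduct.tmul_smul, algebraMap_smul]
      rw [this]
      exact Submodule.smul_mem_smul (Ideal.mem_map_of_mem _ ha)
        (Submodule.tmul_mem_baseChange_of_mem 1 hz)
    · simpa [map_add] using Submodule.add_mem _ hz hw
  · rw [Ideal.map, Submodule.span_smul_eq]
    refine Submodule.set_smul_le _ _ _ ?_
    rintro - z ⟨a, ha, rfl⟩ hz
    have : ∀ w ∈ p.baseChange T, algebraMap R T a • w ∈ (J • p).baseChange T := by
      intro w hw
      rw [Submodule.baseChange_eq_span] at hw
      refine Submodule.span_induction (fun u hu => ?_) (by simp) (fun u v _ _ h1 h2 => ?_)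
        (fun t u _ h1 => ?_) hw
      · obtain ⟨y, hy, rfl⟩ := hu
        have : algebraMap R T a • (TensorProduct.mk R T N 1) y = (1:T) ⊗ₜ[R] (a • y) := by
          simp [TensorProduct.tmul_smul, algebraMap_smul]
        rw [this]
        exact Submodule.tmul_mem_baseChange_of_mem 1 (Submodule.smul_mem_smul ha hy)
      · simpa [smul_add] using Submodule.add_mem _ h1 h2
      · rw [smul_comm]
        exact Submodule.smul_mem _ t h1
    exact this z hz

lemma aux_baseChange_pointwise_smul (r : R) (p : Submodule R N) :
    (r • p).baseChange T = (algebraMap R T r) • p.baseChange T := by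
  rw [← Submodule.ideal_span_singleton_smul, ← Submodule.ideal_span_singleton_smul,
    aux_baseChange_ideal_smul, Ideal.map_span, Set.image_singleton]

lemma aux_one_tmul_eq_zero [Module.FaithfullyFlat R T] {y : N}
    (h : (1:T) ⊗ₜ[R] y = 0) : y = 0 := by
  have hf : LinearMap.toSpanSingleton R N y = 0 := by
    rw [Module.FaithfullyFlat.zero_iff_lTensor_zero R T]
    refine TensorProduct.ext' fun t r => ?_
    have : t ⊗ₜ[R] (r • y) = r • (t • ((1:T) ⊗ₜ[R] y)) := by
      rw [smul_tmul', smul_eq_mul, mul_one, TensorProduct.tmul_smul]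
    simp only [LinearMap.lTensor_tmul, LinearMap.toSpanSingleton_apply, LinearMap.zero_apply]
    rw [this, h, smul_zero, smul_zero]
  simpa using congrArg (fun f => f 1) hf

lemma aux_mem_baseChange_iff [Module.FaithfullyFlat R T] (Q : Submodule R N) {y : N} :
    (1:T) ⊗ₜ[R] y ∈ Q.baseChange T ↔ y ∈ Q := by
  refine ⟨fun h => ?_, fun h => Submodule.tmul_mem_baseChange_of_mem 1 h⟩
  have hker : ∀ w ∈ Q.baseChange T, Q.mkQ.baseChange T w = 0 := by
    intro w hw
    rw [Submodule.baseChange_eq_span] at hw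
    refine Submodule.span_induction (fun u hu => ?_) (by simp) (fun u v _ _ h1 h2 => ?_)
      (fun t u _ h1 => ?_) hw
    · obtain ⟨z, hz, rfl⟩ := hu
      have : Q.mkQ z = 0 := (Submodule.Quotient.mk_eq_zero Q).2 hz
      simp [LinearMap.baseChange_tmul, this]
    · simp [map_add, h1, h2]
    · simp [map_smul, h1]
  have h0 : (1:T) ⊗ₜ[R] (Q.mkQ y) = 0 := by
    simpa [LinearMap.baseChange_tmul] using hker _ h
  have := aux_one_tmul_eq_zero (T := T) h0
  exact (Submodule.Quotient.mk_eq_zero Q).1 this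

end Aux


open TensorProduct in
/-- For a Noetherian faithfully flat `R`-algebra `T`,
`(IT)^{(N ⊗_R T)}_a ∩ R = I^{(N)}_a`. -/
theorem preimage_relIntClosure_map_eq {R : Type} [CommRing R] [IsNoetherianRing R]
    (N : Type) [AddCommGroup N] [Module R N] [Module.Finite R N]
    (T : Type) [CommRing T] [IsNoetherianRing T] [Algebra R T] [Module.FaithfullyFlat R T]
    (I : Ideal R) :
    (algebraMap R T) ⁻¹' ((I.map (algebraMap R T)).relIntClosure (T ⊗[R] N)) =
      I.relIntClosure N := by
  ext x
  simp only [Set.mem_preimage, Ideal.relIntClosure, Ideal.RelIntDep, Set.mem_setOf_eq]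
  have hterm : ∀ n i : ℕ,
      (algebraMap R T x) ^ (n - i) •
          ((I.map (algebraMap R T)) ^ i • (⊤ : Submodule T (T ⊗[R] N)))
        = (x ^ (n - i) • (I ^ i • (⊤ : Submodule R N))).baseChange T := by
    intro n i
    rw [← Submodule.ideal_span_singleton_smul, ← Submodule.ideal_span_singleton_smul,
      aux_baseChange_ideal_smul, aux_baseChange_ideal_smul, Submodule.baseChange_top,
      Ideal.map_span, Set.image_singleton, Ideal.map_pow, map_pow]
  have hS : ∀ n : ℕ,
      (⨆ i ∈ Finset.Icc 1 n, (algebraMap R T x) ^ (n - i) •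
          ((I.map (algebraMap R T)) ^ i • (⊤ : Submodule T (T ⊗[R] N))))
        = (⨆ i ∈ Finset.Icc 1 n,
            x ^ (n - i) • (I ^ i • (⊤ : Submodule R N))).baseChange T := by
    intro n
    simp_rw [aux_baseChange_iSup, hterm]
  constructor
  · rintro ⟨n, hn, h⟩
    refine ⟨n, hn, fun m => ?_⟩
    have hm := h ((1:T) ⊗ₜ[R] m)
    rw [hS n] at hm
    rw [← aux_mem_baseChange_iff (T := T)]
    have heq : (1:T) ⊗ₜ[R] (x ^ n • m)
        = (algebraMap R T x) ^ n • ((1:T) ⊗ₜ[R] m) := by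
      rw [TensorProduct.tmul_smul, ← algebraMap_smul T (x ^ n) ((1:T) ⊗ₜ[R] m), map_pow]
    rw [heq]
    exact hm
  · rintro ⟨n, hn, h⟩
    refine ⟨n, hn, fun m => ?_⟩
    rw [hS n]
    induction m using TensorProduct.induction_on with
    | zero => simp
    | tmul t y =>
        have h1 : t • ((1:T) ⊗ₜ[R] (x ^ n • y))
            = (algebraMap R T x) ^ n • (t ⊗ₜ[R] y) := by
          rw [smul_tmul', smul_eq_mul, mul_one, TensorProduct.tmul_smul,
            ← algebraMap_smul T (x ^ n) (t ⊗ₜ[R] y), map_pow]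
        rw [← h1]
        exact Submodule.smul_mem _ t
          (Submodule.tmul_mem_baseChange_of_mem 1 (h y))
    | add u v hu hv =>
        rw [smul_add]
        exact Submodule.add_mem _ hu hv
end

section
/- Let I be an ideal of a Noetherian commutative ring R, let S be a multiplicatively closed subset of R, and let N be a finitely generated R-module. Then ⋂_{n≥1} S((I^n)^{(N)}_a) = ⋂ { p : p ∈ mAss_R N and (I + p) ∩ S = ∅ }. -/
open Pointwise

set_option maxHeartbeats 1000000

section RelAuxA

variable {R : Type*} [CommRing R]

lemma RelAux.iSup_ideal_smul {ι : Sort*} (f : ι → Ideal R) {N : Type*} [AddCommGroup N]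
    [Module R N] (P : Submodule R N) : (⨆ i, f i) • P = ⨆ i, (f i • P) := by
  apply le_antisymm
  · rw [Submodule.smul_le]
    intro r hr m hm
    refine Submodule.iSup_induction (motive := fun r' : R => r' • m ∈ ⨆ i, f i • P) f hr
      (fun i x hx => ?_)
      (show (0:R) • m ∈ _ by rw [zero_smul]; exact Submodule.zero_mem _)
      (fun x y hx hy => show (x + y) • m ∈ _ by
        rw [add_smul]; exact Submodule.add_mem _ hx hy)
    exact le_iSup (fun i => f i • P) i (Submodule.smul_mem_smul hx hm)
  · exact iSup_le fun i => Submodule.smul_mono_left (le_iSup f i)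

/-- The ideal `∑_{i=1}^k J^i u^{k-i}`. -/
def RelAux.gIdeal (J : Ideal R) (u : R) (k : ℕ) : Ideal R :=
  ⨆ i ∈ Finset.Icc 1 k, J ^ i * Ideal.span {u ^ (k - i)}

namespace RelAux

lemma le_gIdeal {J : Ideal R} {u : R} {k i : ℕ} (h1 : 1 ≤ i) (h2 : i ≤ k) :
    J ^ i * Ideal.span {u ^ (k - i)} ≤ gIdeal J u k :=
  le_iSup_of_le i (le_iSup_of_le (Finset.mem_Icc.mpr ⟨h1, h2⟩) le_rfl)

lemma gIdeal_mul_pow_le (J : Ideal R) (u : R) (a b : ℕ) :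
    gIdeal J u a * Ideal.span {u ^ b} ≤ gIdeal J u (a + b) := by
  rw [gIdeal]
  simp only [Submodule.iSup_mul]
  refine iSup_le fun i => iSup_le fun hi => ?_
  rw [Finset.mem_Icc] at hi
  rw [mul_assoc, Ideal.span_singleton_mul_span_singleton, ← pow_add,
    show a - i + b = a + b - i by omega]
  exact le_gIdeal hi.1 (by omega)

lemma pow_mul_gIdeal_le (J : Ideal R) (u : R) (a b : ℕ) :
    Ideal.span {u ^ a} * gIdeal J u b ≤ gIdeal J u (a + b) := by
  rw [mul_comm]
  have := gIdeal_mul_pow_le J u b a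
  rwa [Nat.add_comm b a] at this

lemma gIdeal_mul_gIdeal_le (J : Ideal R) (u : R) (a b : ℕ) :
    gIdeal J u a * gIdeal J u b ≤ gIdeal J u (a + b) := by
  rw [gIdeal, gIdeal]
  simp only [Submodule.iSup_mul, Submodule.mul_iSup]
  refine iSup_le fun i => iSup_le fun hi => iSup_le fun j => iSup_le fun hj => ?_
  rw [Finset.mem_Icc] at hi hj
  rw [mul_mul_mul_comm, ← pow_add, Ideal.span_singleton_mul_span_singleton, ← pow_add,
    show a - j + (b - i) = a + b - (j + i) by omega]
  exact le_gIdeal (by omega) (by omega)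

/-- `v ≡ u^k` modulo the ideal `gIdeal J u k`. -/
def PP (J : Ideal R) (u : R) (k : ℕ) (v : R) : Prop := v - u ^ k ∈ gIdeal J u k

lemma PP.mul {J : Ideal R} {u : R} {a b : ℕ} {v w : R} (hv : PP J u a v) (hw : PP J u b w) :
    PP J u (a + b) (v * w) := by
  have key : v * w - u ^ (a + b) =
      (v - u ^ a) * u ^ b + (v - u ^ a) * (w - u ^ b) + u ^ a * (w - u ^ b) := by
    rw [pow_add]; ring
  unfold PP at hv hw ⊢
  rw [key]
  refine Submodule.add_mem _ (Submodule.add_mem _ ?_ ?_) ?_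
  · exact gIdeal_mul_pow_le J u a b (Ideal.mul_mem_mul hv (Ideal.mem_span_singleton_self _))
  · exact gIdeal_mul_gIdeal_le J u a b (Ideal.mul_mem_mul hv hw)
  · exact pow_mul_gIdeal_le J u a b (Ideal.mul_mem_mul (Ideal.mem_span_singleton_self _) hw)

lemma PP.one (J : Ideal R) (u : R) : PP J u 0 1 := by
  unfold PP
  rw [pow_zero, sub_self]
  exact Submodule.zero_mem _

lemma PP.pow {J : Ideal R} {u : R} {a : ℕ} {v : R} (hv : PP J u a v) (t : ℕ) :
    PP J u (a * t) (v ^ t) := by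
  induction t with
  | zero => rw [Nat.mul_zero, pow_zero]; exact PP.one J u
  | succ t ih =>
      rw [pow_succ, Nat.mul_succ]
      exact ih.mul hv

lemma PP.prod {J : Ideal R} {u : R} {ι : Type*} [DecidableEq ι] (F : Finset ι) (f : ι → R)
    (h : ∀ q ∈ F, PP J u 1 (f q)) : PP J u F.card (∏ q ∈ F, f q) := by
  induction F using Finset.induction_on with
  | empty => simpa using PP.one J u
  | @insert a F ha ih =>
      rw [Finset.prod_insert ha, Finset.card_insert_of_notMem ha, Nat.add_comm]
      exact (h a (Finset.mem_insert_self a F)).mul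
        (ih fun q hq => h q (Finset.mem_insert_of_mem hq))

lemma gIdeal_smul_top (J : Ideal R) (u : R) (k : ℕ) (N : Type*) [AddCommGroup N] [Module R N] :
    (⨆ i ∈ Finset.Icc 1 k, u ^ (k - i) • (J ^ i • (⊤ : Submodule R N))) = gIdeal J u k • ⊤ := by
  rw [gIdeal, iSup_ideal_smul]
  refine iSup_congr fun i => ?_
  rw [iSup_ideal_smul]
  refine iSup_congr fun hi => ?_
  calc u ^ (k - i) • (J ^ i • (⊤ : Submodule R N))
      = (Ideal.span {u ^ (k - i)}) • (J ^ i • (⊤ : Submodule R N)) :=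
        (Submodule.ideal_span_singleton_smul _ _).symm
    _ = (Ideal.span {u ^ (k - i)} • J ^ i) • (⊤ : Submodule R N) :=
        (Submodule.smul_assoc _ _ _).symm
    _ = (J ^ i * Ideal.span {u ^ (k - i)}) • (⊤ : Submodule R N) := by
        rw [Ideal.smul_eq_mul, mul_comm]

end RelAux

end RelAuxA

section RelAuxB

variable {R : Type} [CommRing R] [IsNoetherianRing R]
variable {N : Type} [AddCommGroup N] [Module R N] [Module.Finite R N]

lemma RelAux.mem_mAss_of_mem_minimalPrimes {q : Ideal R}
    (hq : q ∈ ((⊤ : Submodule R N).annihilator).minimalPrimes) : q ∈ mAss R N := by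
  classical
  have hqp : q.IsPrime := hq.1.1
  have hle : ((⊤ : Submodule R N).annihilator) ≤ q := hq.1.2
  have hone : (1 : R) ∉ q := (Ideal.ne_top_iff_one q).mp hqp.ne_top
  -- the submodule of elements killed by something outside `q`
  set W : Submodule R N :=
    { carrier := {m | ∃ c, c ∉ q ∧ c • m = 0}
      add_mem' := by
        rintro m₁ m₂ ⟨c₁, hc₁, h₁⟩ ⟨c₂, hc₂, h₂⟩
        refine ⟨c₁ * c₂, fun h => ((hqp.mem_or_mem h).elim hc₁ hc₂), ?_⟩
        rw [smul_add]
        have e₁ : (c₁ * c₂) • m₁ = c₂ • (c₁ • m₁) := by rw [mul_comm, mul_smul]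
        have e₂ : (c₁ * c₂) • m₂ = c₁ • (c₂ • m₂) := by rw [mul_smul]
        rw [e₁, e₂, h₁, h₂, smul_zero, smul_zero, add_zero]
      zero_mem' := ⟨1, hone, smul_zero 1⟩
      smul_mem' := by
        rintro r m ⟨c, hc, h⟩
        exact ⟨c, hc, by rw [smul_comm, h, smul_zero]⟩ } with hW
  have hmemW : ∀ m : N, m ∈ W ↔ ∃ c, c ∉ q ∧ c • m = 0 := fun m => Iff.rfl
  -- W ≠ ⊤
  have hWne : W ≠ ⊤ := by
    intro hWtop
    obtain ⟨sgen, hsgen⟩ := Module.Finite.fg_top (R := R) (M := N)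
    have hall : ∀ m : N, ∃ c, c ∉ q ∧ c • m = 0 := by
      intro m
      have : m ∈ W := hWtop ▸ Submodule.mem_top
      exact this
    choose c hc hc0 using hall
    set c0 := ∏ m ∈ sgen, c m with hc0def
    have hc0q : c0 ∉ q := by
      refine Finset.prod_induction c (fun r => r ∉ q)
        (fun a b ha hb h => ((hqp.mem_or_mem h).elim ha hb)) hone (fun m _ => hc m)
    have hkillall : ∀ m ∈ Submodule.span R (sgen : Set N), c0 • m = 0 := by
      intro m hm
      induction hm using Submodule.span_induction with
      | mem y hy =>
          rw [hc0def, ← Finset.mul_prod_erase sgen c hy, mul_comm, mul_smul, hc0 y, smul_zero]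
      | zero => rw [smul_zero]
      | add y z _ _ hy hz => rw [smul_add, hy, hz, add_zero]
      | smul r y _ hy => rw [smul_comm, hy, smul_zero]
    have hc0ann : c0 ∈ ((⊤ : Submodule R N).annihilator) := by
      rw [Submodule.mem_annihilator]
      intro m _
      exact hkillall m (by rw [hsgen]; exact Submodule.mem_top)
    exact hc0q (hle hc0ann)
  -- pick y ∉ W
  have hexy : ∃ y : N, y ∉ W := by
    by_contra h
    push_neg at h
    exact hWne (Submodule.eq_top_iff'.mpr h)
  obtain ⟨y, hyW⟩ := hexy
  have hy0 : (Submodule.Quotient.mk y : N ⧸ W) ≠ 0 := by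
    rw [Ne, Submodule.Quotient.mk_eq_zero]; exact hyW
  obtain ⟨P, hPass, -⟩ := exists_le_isAssociatedPrime_of_isNoetherianRing R _ hy0
  obtain ⟨hPp, z, hz⟩ := (isAssociatedPrime_iff (I := P) (M := N ⧸ W)).mp hPass
  rw [Submodule.bot_colon'] at hz
  have hz0 : z ≠ 0 := by
    rintro rfl
    apply hPp.ne_top
    rw [hz, Submodule.span_zero_singleton, Submodule.annihilator_bot]
  obtain ⟨nz, hnz⟩ := Submodule.Quotient.mk_surjective W z
  -- a helper: r • z = 0 ↔ r • nz ∈ W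
  have hkill : ∀ r : R, r • z = 0 ↔ r • nz ∈ W := by
    intro r
    rw [← hnz, ← Submodule.Quotient.mk_smul, Submodule.Quotient.mk_eq_zero]
  have hPq : P ≤ q := by
    intro r hr
    by_contra hrq
    apply hz0
    have hrz : r • z = 0 := by
      rw [hz, Submodule.mem_annihilator_span_singleton] at hr
      exact hr
    obtain ⟨d, hd, hd0⟩ := (hkill r).mp hrz
    have : nz ∈ W := ⟨d * r, fun h => ((hqp.mem_or_mem h).elim hd hrq), by
      rw [mul_smul]; exact hd0⟩
    rw [← hnz, Submodule.Quotient.mk_eq_zero]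
    exact this
  have hannP : ((⊤ : Submodule R N).annihilator) ≤ P := by
    intro r hr
    rw [hz, Submodule.mem_annihilator_span_singleton]
    rw [hkill r]
    have : r • nz = 0 := Submodule.mem_annihilator.mp hr nz Submodule.mem_top
    rw [this]; exact Submodule.zero_mem _
  have hPeq : P = q := le_antisymm hPq (hq.2 ⟨hPp, hannP⟩ hPq)
  -- lift to an associated prime of N
  obtain ⟨Gq, hGq⟩ := IsNoetherian.noetherian q
  have hgW : ∀ g : R, g ∈ Gq → ∃ d, d ∉ q ∧ d • (g • nz) = 0 := by
    intro g hg
    have hgq : g ∈ q := by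
      rw [← hGq]
      exact Submodule.subset_span hg
    have hgz : g • z = 0 := by
      rw [← hPeq, hz, Submodule.mem_annihilator_span_singleton] at hgq
      exact hgq
    exact (hkill g).mp hgz
  choose! d hd hd0 using hgW
  set d0 := ∏ g ∈ Gq, d g with hd0def
  have hd0q : d0 ∉ q :=
    Finset.prod_induction d (fun r => r ∉ q)
      (fun a b ha hb h => ((hqp.mem_or_mem h).elim ha hb)) hone (fun g hg => hd g hg)
  refine ⟨(isAssociatedPrime_iff (I := q) (M := N)).mpr ⟨hqp, d0 • nz, ?_⟩, ?_⟩
  · -- q = annihilator of span {d0 • nz}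
    rw [Submodule.bot_colon']
    apply le_antisymm
    · rw [← hGq, Submodule.span_le]
      intro g hg
      rw [SetLike.mem_coe, Submodule.mem_annihilator_span_singleton]
      rw [hd0def, ← Finset.mul_prod_erase Gq d hg]
      have : g • ((d g * ∏ r ∈ Gq.erase g, d r) • nz) =
          (∏ r ∈ Gq.erase g, d r) • (d g • (g • nz)) := by
        rw [← mul_smul, ← mul_smul, ← mul_smul]
        ring_nf
      rw [this, hd0 g hg, smul_zero]
    · intro r hr
      rw [Submodule.mem_annihilator_span_singleton] at hr
      have hrd : (r * d0) • nz = 0 := by rw [mul_smul]; exact hr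
      have : (r * d0) • z = 0 := by rw [hkill, hrd]; exact Submodule.zero_mem _
      have hrdP : r * d0 ∈ q := by
        rw [← hPeq, hz, Submodule.mem_annihilator_span_singleton]
        exact this
      exact ((hqp.mem_or_mem hrdP).elim id (fun h => absurd h hd0q))
  · intro p hp hpq
    refine hq.2 ⟨hp.isPrime, ?_⟩ hpq
    obtain ⟨hpp, xp, hxp⟩ := (isAssociatedPrime_iff (I := p) (M := N)).mp hp
    rw [Submodule.bot_colon'] at hxp
    intro r hr
    rw [hxp, Submodule.mem_annihilator_span_singleton]
    exact Submodule.mem_annihilator.mp hr xp Submodule.mem_top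


end RelAuxB

/-- `⋂_{n ≥ 1} S((I^n)^{(N)}_a) = ⋂ {p ∈ mAss_R N : (I + p) ∩ S = ∅}`. -/
theorem inter_sat_relIntClosure_pow_eq {R : Type} [CommRing R] [IsNoetherianRing R]
    (I : Ideal R) (S : Submonoid R) (N : Type) [AddCommGroup N] [Module R N]
    [Module.Finite R N] :
    (⋂ n ∈ {n : ℕ | 1 ≤ n}, sat (S : Set R) ((I ^ n).relIntClosure N)) =
      ⋂ p ∈ {p : Ideal R | p ∈ mAss R N ∧ ((I + p : Ideal R) : Set R) ∩ (S : Set R) = ∅},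
        (p : Set R) := by
  classical
  ext x
  rw [Set.mem_iInter₂, Set.mem_iInter₂]
  constructor
  · -- "⊆" : membership in all saturated closures implies membership in the primes
    intro hx p hp
    obtain ⟨hpAss, hpdisj⟩ := hp
    have hpassoc : IsAssociatedPrime p N := hpAss.1
    have hpp : p.IsPrime := hpassoc.isPrime
    haveI := hpp
    have hannp : ((⊤ : Submodule R N).annihilator) ≤ p := hpassoc.annihilator_le
    have hSIp : ∀ s : R, s ∈ S → s ∉ (I + p : Ideal R) := by
      intro s hsS hmem
      have hx' : s ∈ (((I + p : Ideal R) : Set R) ∩ (S : Set R)) := ⟨hmem, hsS⟩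
      rw [hpdisj] at hx'
      exact hx'
    have hSp : ∀ s : R, s ∈ S → s ∉ p := fun s hsS hsp =>
      hSIp s hsS (Submodule.mem_sup_right hsp)
    letI : Semiring (R ⧸ p) := CommSemiring.toSemiring
    set T : Submonoid (R ⧸ p) := S.map (Ideal.Quotient.mk p) with hT
    have hTle : T ≤ nonZeroDivisors (R ⧸ p) := by
      rintro t ⟨s, hsS, rfl⟩
      refine mem_nonZeroDivisors_of_ne_zero ?_
      rw [Ne, Ideal.Quotient.eq_zero_iff_mem]
      exact hSp s hsS
    haveI hdom : IsDomain (Localization T) := IsLocalization.isDomain_localization hTle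
    haveI hnoeth : IsNoetherianRing (Localization T) :=
      IsLocalization.isNoetherianRing T (Localization T) inferInstance
    set φ : R →+* Localization T :=
      (algebraMap (R ⧸ p) (Localization T)).comp (Ideal.Quotient.mk p) with hφ
    set z : Localization T := φ x with hzdef
    set 𝔠 : Ideal (Localization T) := Ideal.map φ I with h𝔠
    have hφzero : ∀ r : R, r ∈ p → φ r = 0 := by
      intro r hr
      rw [hφ, RingHom.comp_apply, Ideal.Quotient.eq_zero_iff_mem.mpr hr, map_zero]
    have hφunit : ∀ s : R, s ∈ S → IsUnit (φ s) := by
      intro s hsS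
      rw [hφ, RingHom.comp_apply]
      exact IsLocalization.map_units (Localization T)
        ⟨Ideal.Quotient.mk p s, Submonoid.mem_map.mpr ⟨s, hsS, rfl⟩⟩
    have hcne : 𝔠 ≠ ⊤ := by
      intro htop
      have h1 : (1 : Localization T) ∈ Ideal.map φ I := by
        rw [← h𝔠, htop]; exact Submodule.mem_top
      rw [hφ, ← Ideal.map_map] at h1
      rw [IsLocalization.mem_map_algebraMap_iff T (Localization T)] at h1
      obtain ⟨⟨a, t⟩, hat⟩ := h1
      rw [one_mul] at hat
      obtain ⟨u', hu'⟩ := (IsLocalization.eq_iff_exists T (Localization T)).mp hat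
      have hmemT : (u' : R ⧸ p) * (t : R ⧸ p) ∈ T := mul_mem u'.2 t.2
      have hmemI : (u' : R ⧸ p) * (t : R ⧸ p) ∈ Ideal.map (Ideal.Quotient.mk p) I := by
        rw [hu']
        exact Ideal.mul_mem_left _ _ a.2
      obtain ⟨s1, hs1S, hs1⟩ := hmemT
      obtain ⟨a1, ha1I, ha1⟩ :=
        (Ideal.mem_map_iff_of_surjective _ Ideal.Quotient.mk_surjective).mp hmemI
      have hsub : s1 - a1 ∈ p := Ideal.Quotient.eq.mp (hs1.trans ha1.symm)
      have hs1mem : s1 ∈ (I + p : Ideal R) :=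
        Submodule.mem_sup.mpr ⟨a1, ha1I, s1 - a1, hsub, by ring⟩
      exact hSIp s1 hs1S hs1mem
    by_contra hxp
    have hz0 : z ≠ 0 := by
      rw [hzdef, hφ, RingHom.comp_apply]
      intro h
      have h2 := IsLocalization.injective (Localization T) hTle
        (h.trans (map_zero (algebraMap (R ⧸ p) (Localization T))).symm)
      rw [Ideal.Quotient.eq_zero_iff_mem] at h2
      exact hxp h2
    obtain ⟨c, hc⟩ := Ideal.exists_pow_inf_eq_pow_smul 𝔠 (Ideal.span {z})
    have hstep : ∀ (B : ℕ) (dd : Localization T), z * dd ∈ 𝔠 ^ B → dd ∈ 𝔠 ^ (B - c) := by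
      intro B dd hdd
      rcases lt_or_ge B c with hB | hB
      · rw [Nat.sub_eq_zero_of_le hB.le, pow_zero, Ideal.one_eq_top]
        exact Submodule.mem_top
      · have hsm : 𝔠 ^ B • (⊤ : Submodule (Localization T) (Localization T)) = 𝔠 ^ B := by
          rw [Ideal.smul_eq_mul, Ideal.mul_top]
        have h1 : z * dd ∈ 𝔠 ^ B • (⊤ : Submodule (Localization T) (Localization T))
            ⊓ Ideal.span {z} := by
          rw [Submodule.mem_inf, hsm]
          exact ⟨hdd, Ideal.mem_span_singleton'.mpr ⟨dd, mul_comm dd z⟩⟩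
        rw [hc B hB] at h1
        have h2 : z * dd ∈ 𝔠 ^ (B - c) • Ideal.span {z} :=
          Submodule.smul_mono le_rfl inf_le_right h1
        obtain ⟨bb, hbb, hbbz⟩ := Submodule.mem_smul_span_singleton.mp h2
        have heq : z * dd = z * bb := by rw [← hbbz, smul_eq_mul, mul_comm]
        rw [mul_left_cancel₀ hz0 heq]
        exact hbb
    have hcol : ∀ (j A : ℕ) (dd : Localization T), z ^ j * dd ∈ 𝔠 ^ A →
        dd ∈ 𝔠 ^ (A - j * c) := by
      intro j
      induction j with
      | zero => intro A dd h; rw [pow_zero, one_mul] at h; simpa using h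
      | succ j ih =>
          intro A dd h
          have h' : z ^ j * (z * dd) ∈ 𝔠 ^ A := by
            rw [show z ^ j * (z * dd) = z ^ (j + 1) * dd by rw [pow_succ]; ring]
            exact h
          have h2 := hstep _ _ (ih _ _ h')
          rwa [show A - j * c - c = A - (j + 1) * c by rw [add_mul, one_mul, Nat.sub_sub]] at h2
    obtain ⟨s, hsS, hscl⟩ := hx (c + 1) (by change (1:ℕ) ≤ c + 1; omega)
    obtain ⟨K, hK0, hrel⟩ := hscl
    set u := s * x with hu
    set J : Ideal R := I ^ (c + 1) with hJ
    have hrange : LinearMap.range (algebraMap R (Module.End R N) (u ^ K)) ≤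
        (RelAux.gIdeal J u K) • (⊤ : Submodule R N) := by
      rintro v ⟨m, rfl⟩
      rw [Module.algebraMap_end_apply, ← RelAux.gIdeal_smul_top]
      exact hrel m
    obtain ⟨pc, hmonic, -, hcoeff, haeval⟩ :=
      LinearMap.exists_monic_and_coeff_mem_pow_and_aeval_eq_zero_of_range_le_smul R
        (algebraMap R (Module.End R N) (u ^ K)) (RelAux.gIdeal J u K) hrange
    have hEann : pc.eval (u ^ K) ∈ (⊤ : Submodule R N).annihilator := by
      rw [Submodule.mem_annihilator]
      intro m _
      have h1 : Polynomial.aeval (algebraMap R (Module.End R N) (u ^ K)) pc =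
          algebraMap R (Module.End R N) (pc.eval (u ^ K)) :=
        Polynomial.aeval_algebraMap_apply_eq_algebraMap_eval _ _
      have h2 : algebraMap R (Module.End R N) (pc.eval (u ^ K)) = 0 := by
        rw [← h1, haeval]
      have h3 : pc.eval (u ^ K) • m = algebraMap R (Module.End R N) (pc.eval (u ^ K)) m := by
        rw [Module.algebraMap_end_apply]
      rw [h3, h2, LinearMap.zero_apply]
    have hEp : pc.eval (u ^ K) ∈ p := hannp hEann
    have hgpos : 0 < pc.natDegree := by
      rcases Nat.eq_zero_or_pos pc.natDegree with h0 | h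
      · exfalso
        have hpc1 : pc = 1 := hmonic.natDegree_eq_zero.mp h0
        rw [hpc1] at hEp
        simp only [Polynomial.eval_one] at hEp
        exact hpp.ne_top ((Ideal.eq_top_iff_one p).mpr hEp)
      · exact h
    set w : Localization T := φ u with hwdef
    set 𝔠' : Ideal (Localization T) := 𝔠 ^ (c + 1) with h𝔠'
    set Q : Ideal (Localization T) := 𝔠' ⊔ Ideal.span {w} with hQ
    have hwQ : w ∈ Q := by
      rw [hQ]
      exact Submodule.mem_sup_right (Ideal.mem_span_singleton_self w)
    have h𝔠'Q : 𝔠' ≤ Q := le_sup_left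
    have hmapg : Ideal.map φ (RelAux.gIdeal J u K) ≤ 𝔠' * Q ^ (K - 1) := by
      rw [Ideal.map_le_iff_le_comap, RelAux.gIdeal]
      refine iSup_le fun i => iSup_le fun hi => ?_
      rw [Finset.mem_Icc] at hi
      rw [Ideal.mul_le]
      intro r1 hr1 r2 hr2
      rw [Ideal.mem_comap, map_mul]
      obtain ⟨r3, hr3⟩ := Ideal.mem_span_singleton'.mp hr2
      have hmapJ : Ideal.map φ (J ^ i) = 𝔠' ^ i := by
        rw [hJ, Ideal.map_pow, Ideal.map_pow, ← h𝔠, ← h𝔠']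
      have hφr1 : φ r1 ∈ 𝔠' ^ i := hmapJ ▸ Ideal.mem_map_of_mem φ hr1
      have hmem : φ r1 * w ^ (K - i) ∈ 𝔠' * Q ^ (K - 1) := by
        have h1 : φ r1 * w ^ (K - i) ∈ 𝔠' ^ i * Q ^ (K - i) :=
          Ideal.mul_mem_mul hφr1 (Ideal.pow_mem_pow hwQ _)
        have hinc : 𝔠' ^ i * Q ^ (K - i) ≤ 𝔠' * Q ^ (K - 1) := by
          have hi1 : 𝔠' ^ i = 𝔠' * 𝔠' ^ (i - 1) := by
            rw [← pow_succ']
            congr 1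
            omega
          rw [hi1, mul_assoc]
          refine Ideal.mul_mono_right ?_
          calc 𝔠' ^ (i - 1) * Q ^ (K - i) ≤ Q ^ (i - 1) * Q ^ (K - i) :=
                Ideal.mul_mono_left (Ideal.pow_right_mono h𝔠'Q _)
            _ = Q ^ (K - 1) := by rw [← pow_add]; congr 1; omega
        exact hinc h1
      rw [← hr3, map_mul, map_pow]
      rw [show φ r1 * (φ r3 * φ u ^ (K - i)) = φ r3 * (φ r1 * φ u ^ (K - i)) by ring]
      exact Ideal.mul_mem_left _ _ hmem
    have hbase : w ^ (K * pc.natDegree) ∈ 𝔠' * Q ^ (K * pc.natDegree - 1) := by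
      have h0 : φ (pc.eval (u ^ K)) = 0 := hφzero _ hEp
      rw [Polynomial.eval_eq_sum_range, map_sum, Finset.sum_range_succ] at h0
      have htop : φ (pc.coeff pc.natDegree * (u ^ K) ^ pc.natDegree)
          = w ^ (K * pc.natDegree) := by
        rw [hmonic.coeff_natDegree, one_mul, ← pow_mul, map_pow, hwdef]
      rw [htop] at h0
      have hsum : w ^ (K * pc.natDegree)
          = -∑ i ∈ Finset.range pc.natDegree, φ (pc.coeff i * (u ^ K) ^ i) :=
        eq_neg_of_add_eq_zero_right h0
      rw [hsum]
      refine Submodule.neg_mem _ (Submodule.sum_mem _ fun i hi => ?_)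
      rw [Finset.mem_range] at hi
      rw [map_mul, ← pow_mul, map_pow]
      have hc1 : φ (pc.coeff i) ∈ (𝔠' * Q ^ (K - 1)) ^ (pc.natDegree - i) := by
        have h1 : φ (pc.coeff i) ∈ Ideal.map φ ((RelAux.gIdeal J u K) ^ (pc.natDegree - i)) :=
          Ideal.mem_map_of_mem φ (hcoeff i)
        rw [Ideal.map_pow] at h1
        exact Ideal.pow_right_mono hmapg _ h1
      have hc2 : (φ u) ^ (K * i) ∈ Q ^ (K * i) := by
        rw [← hwdef]
        exact Ideal.pow_mem_pow hwQ _
      have hmul : φ (pc.coeff i) * (φ u) ^ (K * i) ∈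
          (𝔠' * Q ^ (K - 1)) ^ (pc.natDegree - i) * Q ^ (K * i) := Ideal.mul_mem_mul hc1 hc2
      have hinc : (𝔠' * Q ^ (K - 1)) ^ (pc.natDegree - i) * Q ^ (K * i)
          ≤ 𝔠' * Q ^ (K * pc.natDegree - 1) := by
        obtain ⟨j, hj⟩ : ∃ j, pc.natDegree - i = j + 1 := ⟨pc.natDegree - i - 1, by omega⟩
        rw [hj, mul_pow]
        calc 𝔠' ^ (j + 1) * (Q ^ (K - 1)) ^ (j + 1) * Q ^ (K * i)
            = 𝔠' * (𝔠' ^ j * ((Q ^ (K - 1)) ^ (j + 1) * Q ^ (K * i))) := by ring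
          _ ≤ 𝔠' * (Q ^ j * ((Q ^ (K - 1)) ^ (j + 1) * Q ^ (K * i))) :=
              Ideal.mul_mono_right (Ideal.mul_mono_left (Ideal.pow_right_mono h𝔠'Q _))
          _ = 𝔠' * Q ^ (j + ((K - 1) * (j + 1) + K * i)) := by
              rw [← pow_mul, ← pow_add, ← pow_add]
          _ ≤ 𝔠' * Q ^ (K * pc.natDegree - 1) := by
              have e1 : (K - 1) * (j + 1) + (j + 1) = K * (j + 1) := by
                have hK1 : K - 1 + 1 = K := by omega
                conv_rhs => rw [← hK1]
                rw [add_mul, one_mul]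
              have e2 : K * pc.natDegree = K * i + K * (j + 1) := by
                have hd : pc.natDegree = i + (j + 1) := by omega
                rw [hd, Nat.mul_add]
              have hexp : j + ((K - 1) * (j + 1) + K * i) = K * pc.natDegree - 1 := by
                omega
              rw [hexp]
      exact hinc hmul
    have hKg1 : K * pc.natDegree - 1 + 1 = K * pc.natDegree := by
      have : 1 ≤ K * pc.natDegree := Nat.one_le_iff_ne_zero.mpr
        (Nat.mul_ne_zero (by omega) (by omega))
      omega
    have hbin : ∀ M : ℕ, Q ^ (M + 1) ≤ 𝔠' * Q ^ M ⊔ Ideal.span {w ^ (M + 1)} := by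
      intro M
      induction M with
      | zero =>
          simp only [zero_add, pow_one, pow_zero, mul_one]
          rw [hQ]
      | succ M ih =>
          have hstep2 : Q ^ (M + 2) ≤ (𝔠' * Q ^ M ⊔ Ideal.span {w ^ (M + 1)}) * Q := by
            rw [pow_succ]
            exact Ideal.mul_mono_left ih
          refine hstep2.trans ?_
          rw [Submodule.sup_mul]
          refine sup_le ?_ ?_
          · rw [mul_assoc, ← pow_succ]
            exact le_sup_left
          · rw [hQ, Submodule.mul_sup]
            refine sup_le ?_ ?_
            · rw [mul_comm]
              refine le_sup_left.trans' ?_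
              refine Ideal.mul_mono_right ?_
              rw [Ideal.span_singleton_le_iff_mem]
              exact Ideal.pow_mem_pow hwQ _
            · rw [Ideal.span_singleton_mul_span_singleton, ← pow_succ]
              exact le_sup_right
    have hQpow : Q ^ (K * pc.natDegree) ≤ 𝔠' * Q ^ (K * pc.natDegree - 1) := by
      have h1 := hbin (K * pc.natDegree - 1)
      rw [hKg1] at h1
      refine h1.trans (sup_le le_rfl ?_)
      rw [Ideal.span_singleton_le_iff_mem]
      exact hbase
    have hiter : ∀ m : ℕ,
        w ^ (K * pc.natDegree + m) ∈ 𝔠' ^ (m + 1) * Q ^ (K * pc.natDegree - 1) := by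
      intro m
      induction m with
      | zero => rw [Nat.add_zero, pow_one]; exact hbase
      | succ m ih =>
          have h1 : w ^ (K * pc.natDegree + m) * w ∈
              (𝔠' ^ (m + 1) * Q ^ (K * pc.natDegree - 1)) * Q := Ideal.mul_mem_mul ih hwQ
          rw [← pow_succ] at h1
          have h2 : (𝔠' ^ (m + 1) * Q ^ (K * pc.natDegree - 1)) * Q ≤
              𝔠' ^ (m + 2) * Q ^ (K * pc.natDegree - 1) := by
            calc (𝔠' ^ (m + 1) * Q ^ (K * pc.natDegree - 1)) * Q
                = 𝔠' ^ (m + 1) * Q ^ (K * pc.natDegree - 1 + 1) := by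
                  rw [mul_assoc, pow_succ Q]
              _ = 𝔠' ^ (m + 1) * Q ^ (K * pc.natDegree) := by rw [hKg1]
              _ ≤ 𝔠' ^ (m + 1) * (𝔠' * Q ^ (K * pc.natDegree - 1)) :=
                  Ideal.mul_mono_right hQpow
              _ = 𝔠' ^ (m + 2) * Q ^ (K * pc.natDegree - 1) := by
                  rw [← mul_assoc, ← pow_succ]
          have h3 := h2 h1
          rwa [show K * pc.natDegree + m + 1 = K * pc.natDegree + (m + 1) by omega] at h3
    have hzpow : ∀ m : ℕ, z ^ (K * pc.natDegree + m) ∈ 𝔠 ^ ((c + 1) * (m + 1)) := by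
      intro m
      have h1 : w ^ (K * pc.natDegree + m) ∈ 𝔠' ^ (m + 1) := by
        have h2 := hiter m
        have h3 : 𝔠' ^ (m + 1) * Q ^ (K * pc.natDegree - 1) ≤ 𝔠' ^ (m + 1) :=
          Ideal.mul_le_left
        exact h3 h2
      have hw : w = φ s * z := by rw [hwdef, hu, map_mul]
      have h4 : (φ s) ^ (K * pc.natDegree + m) * z ^ (K * pc.natDegree + m) ∈ 𝔠' ^ (m + 1) := by
        rw [← mul_pow, ← hw]
        exact h1
      have h5 : z ^ (K * pc.natDegree + m) ∈ 𝔠' ^ (m + 1) :=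
        (Ideal.unit_mul_mem_iff_mem _ ((hφunit s hsS).pow _)).mp h4
      rwa [h𝔠', ← pow_mul] at h5
    have h1mem : (1 : Localization T) ∈
        𝔠 ^ ((c + 1) * (K * pc.natDegree * c + 1) -
          (K * pc.natDegree + K * pc.natDegree * c) * c) := by
      refine hcol (K * pc.natDegree + K * pc.natDegree * c) _ 1 ?_
      rw [mul_one]
      exact hzpow (K * pc.natDegree * c)
    have hexp : (c + 1) * (K * pc.natDegree * c + 1) -
        (K * pc.natDegree + K * pc.natDegree * c) * c = c + 1 := by
      have hiden : (c + 1) * (K * pc.natDegree * c + 1) =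
          (K * pc.natDegree + K * pc.natDegree * c) * c + (c + 1) := by ring
      omega
    rw [hexp] at h1mem
    exact hcne ((Ideal.eq_top_iff_one 𝔠).mpr (Ideal.pow_le_self (by omega) h1mem))
  · -- "⊇"
    intro hx n hn
    set J0 : Ideal R := (⊤ : Submodule R N).annihilator with hJ0
    have hfin : J0.minimalPrimes.Finite := by
      rw [Ideal.minimalPrimes_eq_comap]
      exact Set.Finite.image _ (minimalPrimes.finite_of_isNoetherianRing _)
    set Qf : Finset (Ideal R) := hfin.toFinset with hQf
    have claim1 : ∀ q ∈ Qf, ∃ v a : R, v ∈ S ∧ a ∈ I ^ n ∧ v * x - a ∈ q := by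
      intro q hq
      rw [hQf, Set.Finite.mem_toFinset] at hq
      rcases Set.eq_empty_or_nonempty (((I + q : Ideal R) : Set R) ∩ (S : Set R)) with hemp | hne
      · have hmem : q ∈ mAss R N := RelAux.mem_mAss_of_mem_minimalPrimes hq
        have hxq : x ∈ q := hx q ⟨hmem, hemp⟩
        exact ⟨1, 0, S.one_mem, Submodule.zero_mem _, by rw [one_mul, sub_zero]; exact hxq⟩
      · obtain ⟨s0, hs0Iq, hs0S⟩ := hne
        obtain ⟨a, haI, b, hbq, hab⟩ := Submodule.mem_sup.mp hs0Iq
        refine ⟨s0 ^ n, a ^ n * x, pow_mem hs0S n,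
          Ideal.mul_mem_right _ _ (Ideal.pow_mem_pow haI n), ?_⟩
        obtain ⟨k, hk⟩ := sub_dvd_pow_sub_pow s0 a n
        have hsmaq : s0 - a ∈ q := by
          rw [show s0 - a = b by rw [← hab]; ring]
          exact hbq
        have hq1 : s0 ^ n - a ^ n ∈ q := hk ▸ Ideal.mul_mem_right _ _ hsmaq
        rw [show s0 ^ n * x - a ^ n * x = (s0 ^ n - a ^ n) * x by ring]
        exact Ideal.mul_mem_right _ _ hq1
    choose! v a hvS haI hqmem using claim1
    set s := ∏ q ∈ Qf, v q with hs
    have hsS : s ∈ S := prod_mem fun q hq => hvS q hq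
    refine ⟨s, hsS, ?_⟩
    show Ideal.RelIntDep (I ^ n) N (s * x)
    set u := s * x with hu
    set b : Ideal R → R := fun q => a q * ∏ r ∈ Qf.erase q, v r with hb
    have claim2 : ∀ q ∈ Qf, u - b q ∈ q := by
      intro q hq
      have hrw : u - b q = (v q * x - a q) * ∏ r ∈ Qf.erase q, v r := by
        rw [hu, hs, hb, ← Finset.mul_prod_erase Qf v hq]
        ring
      rw [hrw]
      exact Ideal.mul_mem_right _ _ (hqmem q hq)
    have hbI : ∀ q ∈ Qf, b q ∈ I ^ n := fun q hq => Ideal.mul_mem_right _ _ (haI q hq)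
    set E := ∏ q ∈ Qf, (u - b q) with hE
    have hErad : E ∈ J0.radical := by
      rw [← Ideal.sInf_minimalPrimes]
      refine Submodule.mem_sInf.mpr fun q hq => ?_
      have hq' : q ∈ Qf := by rw [hQf, Set.Finite.mem_toFinset]; exact hq
      rw [hE, ← Finset.mul_prod_erase Qf _ hq']
      exact Ideal.mul_mem_right _ _ (claim2 q hq')
    obtain ⟨t, ht⟩ := Ideal.mem_radical_iff.mp hErad
    have hPE : RelAux.PP (I ^ n) u Qf.card E := by
      refine RelAux.PP.prod Qf _ fun q hq => ?_
      show (u - b q) - u ^ 1 ∈ RelAux.gIdeal (I ^ n) u 1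
      rw [pow_one, show u - b q - u = -(b q) by ring]
      have hle1 : (I ^ n) ^ 1 * Ideal.span {u ^ (1 - 1)} ≤ RelAux.gIdeal (I ^ n) u 1 :=
        RelAux.le_gIdeal le_rfl le_rfl
      have h1 : b q * u ^ (1 - 1) ∈ (I ^ n) ^ 1 * Ideal.span {u ^ (1 - 1)} :=
        Ideal.mul_mem_mul (by rw [pow_one]; exact hbI q hq) (Ideal.mem_span_singleton_self _)
      have h2 := hle1 h1
      refine Submodule.neg_mem _ ?_
      simpa using h2
    have hPEt : RelAux.PP (I ^ n) u (Qf.card * t) (E ^ t) := hPE.pow t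
    by_cases hK : Qf.card * t = 0
    · have h1J : (1 : R) ∈ J0 := by
        have h2 : E ^ t - u ^ (Qf.card * t) ∈ RelAux.gIdeal (I ^ n) u (Qf.card * t) := hPEt
        rw [hK] at h2
        have hbot : RelAux.gIdeal (I ^ n) u 0 = ⊥ := by
          rw [RelAux.gIdeal]
          simp
        rw [hbot, pow_zero, Submodule.mem_bot, sub_eq_zero] at h2
        rw [← h2]
        exact ht
      have hN0 : ∀ m : N, m = 0 := by
        intro m
        have h3 := Submodule.mem_annihilator.mp h1J m Submodule.mem_top
        simpa using h3
      exact ⟨1, one_pos, fun m => by rw [hN0 m, smul_zero]; exact Submodule.zero_mem _⟩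
    · refine ⟨Qf.card * t, Nat.pos_of_ne_zero hK, fun m => ?_⟩
      rw [RelAux.gIdeal_smul_top]
      rw [show u ^ (Qf.card * t) • m =
          (E ^ t) • m - (E ^ t - u ^ (Qf.card * t)) • m by rw [sub_smul, sub_sub_cancel]]
      rw [Submodule.mem_annihilator.mp ht m Submodule.mem_top, zero_sub]
      exact Submodule.neg_mem _ (Submodule.smul_mem_smul hPEt Submodule.mem_top)
end
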